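/- Let (E,z) be a gradient pair for H ∈ C¹(X,ℝ) on an open set X ⊆ ℝⁿ, and suppose there exist an open set X̃ ⊆ ℝⁿ, a diffeomorphism φ ∈ C¹(X̃,X), and a continuous pointwise invertible U : X̃ → ℝ^{n×n} such that the transformed pair (Uᵀ(E∘φ)Dφ, U^{-1}(z∘φ)) is a semi-explicit gradient pair for H∘φ. Then there exists a discrete gradient pair for (H,E,z). -/

import Mathlib

open Matrix Set

/-- The standard basis vectors of `ℝ^{n₁} × ℝ^{n₂}`, indexed by `Fin n₁ ⊕ Fin n₂`. -/
def basisP {n1 n2 : ℕ} (j : Fin n1 ⊕ Fin n2) : (Fin n1 → ℝ) × (Fin n2 → ℝ) :=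
  Sum.elim (fun j1 => (Pi.single j1 1, 0)) (fun j2 => (0, Pi.single j2 1)) j

/-- The gradient of a scalar function on `ℝ^{n₁} × ℝ^{n₂}` as a vector indexed by
`Fin n₁ ⊕ Fin n₂`. -/
noncomputable def gradP {n1 n2 : ℕ} (f : ((Fin n1 → ℝ) × (Fin n2 → ℝ)) → ℝ)
    (x : (Fin n1 → ℝ) × (Fin n2 → ℝ)) : Fin n1 ⊕ Fin n2 → ℝ :=
  fun i => fderiv ℝ f x (basisP i)

/-- The Jacobian matrix of a map on `ℝ^{n₁} × ℝ^{n₂}`. -/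
noncomputable def jacP {n1 n2 : ℕ}
    (f : ((Fin n1 → ℝ) × (Fin n2 → ℝ)) → ((Fin n1 → ℝ) × (Fin n2 → ℝ)))
    (x : (Fin n1 → ℝ) × (Fin n2 → ℝ)) :
    Matrix (Fin n1 ⊕ Fin n2) (Fin n1 ⊕ Fin n2) ℝ :=
  Matrix.of fun i j =>
    Sum.elim (fderiv ℝ f x (basisP j)).1 (fderiv ℝ f x (basisP j)).2 i

def IsDiscreteGradientPairProd {n1 n2 : ℕ} (X : Set ((Fin n1 → ℝ) × (Fin n2 → ℝ)))
    (H : ((Fin n1 → ℝ) × (Fin n2 → ℝ)) → ℝ)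
    (E : ((Fin n1 → ℝ) × (Fin n2 → ℝ)) → Matrix (Fin n1 ⊕ Fin n2) (Fin n1 ⊕ Fin n2) ℝ)
    (z : ((Fin n1 → ℝ) × (Fin n2 → ℝ)) → (Fin n1 ⊕ Fin n2 → ℝ))
    (Ebar : ((Fin n1 → ℝ) × (Fin n2 → ℝ)) → ((Fin n1 → ℝ) × (Fin n2 → ℝ)) →
      Matrix (Fin n1 ⊕ Fin n2) (Fin n1 ⊕ Fin n2) ℝ)
    (zbar : ((Fin n1 → ℝ) × (Fin n2 → ℝ)) → ((Fin n1 → ℝ) × (Fin n2 → ℝ)) →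
      (Fin n1 ⊕ Fin n2 → ℝ)) : Prop :=
  ContinuousOn (fun p : ((Fin n1 → ℝ) × (Fin n2 → ℝ)) × ((Fin n1 → ℝ) × (Fin n2 → ℝ)) =>
    Ebar p.1 p.2) (X ×ˢ X) ∧
  ContinuousOn (fun p : ((Fin n1 → ℝ) × (Fin n2 → ℝ)) × ((Fin n1 → ℝ) × (Fin n2 → ℝ)) =>
    zbar p.1 p.2) (X ×ˢ X) ∧
  (∀ x ∈ X, ∀ x' ∈ X,
    zbar x x' ⬝ᵥ (Ebar x x').mulVec (Sum.elim (x'.1 - x.1) (x'.2 - x.2)) = H x' - H x) ∧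
  (∀ x ∈ X, Ebar x x = E x) ∧
  (∀ x ∈ X, zbar x x = z x)

namespace DGaux

section helpers
variable {ι κ : Type*} [Fintype ι] [Fintype κ]

omit [Fintype ι] in
lemma cEntry (i : ι) (j : κ) : Continuous fun M : Matrix ι κ ℝ => M i j :=
  (continuous_apply j).comp (continuous_apply i)

lemma cDot : Continuous fun w : (ι → ℝ) × (ι → ℝ) => w.1 ⬝ᵥ w.2 := by
  unfold dotProduct
  exact continuous_finset_sum _ fun j _ =>
    ((continuous_apply j).comp continuous_fst).mul ((continuous_apply j).comp continuous_snd)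

omit [Fintype ι] in
lemma cMulVec : Continuous fun r : Matrix ι κ ℝ × (κ → ℝ) => r.1 *ᵥ r.2 := by
  refine continuous_pi fun i => ?_
  unfold Matrix.mulVec dotProduct
  exact continuous_finset_sum _ fun j _ =>
    (((continuous_apply j).comp ((continuous_apply i).comp continuous_fst)).mul
      ((continuous_apply j).comp continuous_snd))

lemma contOn_matrix_inv {α : Type*} [TopologicalSpace α] [DecidableEq ι] {f : α → Matrix ι ι ℝ}
    {s : Set α} (hf : ContinuousOn f s) (h : ∀ x ∈ s, IsUnit (f x).det) :
    ContinuousOn (fun x => (f x)⁻¹) s := by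
  have heq : ∀ x ∈ s, (f x)⁻¹ = ((f x).det)⁻¹ • (f x).adjugate := fun x _ => by
    rw [Matrix.inv_def, Ring.inverse_eq_inv]
  refine ContinuousOn.congr (?_ : ContinuousOn (fun x => ((f x).det)⁻¹ • (f x).adjugate) s) heq
  refine ContinuousOn.fun_smul ?_ ?_
  · exact (((Continuous.matrix_det continuous_id).comp_continuousOn hf)).inv₀
      fun x hx => isUnit_iff_ne_zero.1 (h x hx)
  · exact (Continuous.matrix_adjugate continuous_id).comp_continuousOn hf

lemma contOn_matrix_mul {α : Type*} [TopologicalSpace α] {f g : α → Matrix ι ι ℝ}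
    {s : Set α} (hf : ContinuousOn f s) (hg : ContinuousOn g s) :
    ContinuousOn (fun x => f x * g x) s :=
  by have := (Continuous.matrix_mul (continuous_fst : Continuous fun p : Matrix ι ι ℝ × Matrix ι ι ℝ => p.1)
      continuous_snd).comp_continuousOn (hf.prodMk hg); exact this

omit [Fintype ι] in
lemma contOn_mulVec {α : Type*} [TopologicalSpace α] {f : α → Matrix ι κ ℝ} {g : α → κ → ℝ}
    {s : Set α} (hf : ContinuousOn f s) (hg : ContinuousOn g s) :
    ContinuousOn (fun x => f x *ᵥ g x) s :=
  by have := cMulVec.comp_continuousOn (hf.prodMk hg); exact this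

lemma sq_norm_le_dot (w : ι → ℝ) : ‖w‖ ^ 2 ≤ w ⬝ᵥ w := by
  have h0 : 0 ≤ w ⬝ᵥ w := Finset.sum_nonneg fun i _ => mul_self_nonneg _
  have h1 : ‖w‖ ≤ Real.sqrt (w ⬝ᵥ w) := by
    refine (pi_norm_le_iff_of_nonneg (Real.sqrt_nonneg _)).2 fun i => ?_
    have h2 : |w i| = Real.sqrt (w i * w i) := by rw [Real.sqrt_mul_self_eq_abs]
    rw [Real.norm_eq_abs, h2]
    exact Real.sqrt_le_sqrt (Finset.single_le_sum (f := fun j => w j * w j)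
      (fun j _ => mul_self_nonneg _) (Finset.mem_univ i))
  calc ‖w‖ ^ 2 ≤ Real.sqrt (w ⬝ᵥ w) ^ 2 := by
        exact pow_le_pow_left₀ (norm_nonneg _) h1 2
    _ = w ⬝ᵥ w := Real.sq_sqrt h0

/-- Mean value / Taylor estimate for `C¹` functions on an open set. -/
theorem taylor_est {E F : Type*} [NormedAddCommGroup E] [NormedSpace ℝ E]
    [NormedAddCommGroup F] [NormedSpace ℝ F] {f : E → F} {S : Set E}
    (hS : IsOpen S) (hf : ContDiffOn ℝ 1 f S) {x₀ : E} (hx : x₀ ∈ S) {ε : ℝ} (hε : 0 < ε) :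
    ∃ δ > 0, Metric.ball x₀ δ ⊆ S ∧ ∀ u ∈ Metric.ball x₀ δ, ∀ u' ∈ Metric.ball x₀ δ,
      ‖f u' - f u - fderiv ℝ f u (u' - u)‖ ≤ ε * ‖u' - u‖ := by
  have hfd : ContinuousOn (fderiv ℝ f) S := hf.continuousOn_fderiv_of_isOpen hS le_rfl
  have hca : ContinuousAt (fderiv ℝ f) x₀ := hfd.continuousAt (hS.mem_nhds hx)
  rcases Metric.continuousAt_iff.1 hca (ε/2) (half_pos hε) with ⟨δ₁, hδ₁, hball⟩
  rcases Metric.isOpen_iff.1 hS x₀ hx with ⟨δ₂, hδ₂, hsub⟩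
  have hBsub : Metric.ball x₀ (min δ₁ δ₂) ⊆ S :=
    (Metric.ball_subset_ball (min_le_right _ _)).trans hsub
  refine ⟨min δ₁ δ₂, lt_min hδ₁ hδ₂, hBsub, ?_⟩
  intro u hu u' hu'
  refine Convex.norm_image_sub_le_of_norm_fderiv_le' (𝕜 := ℝ)
    (fun v hv => ?_) (fun v hv => ?_) (convex_ball x₀ (min δ₁ δ₂)) hu hu'
  · exact (hf.contDiffAt (hS.mem_nhds (hBsub hv))).differentiableAt one_ne_zero
  · have h1 : dist (fderiv ℝ f v) (fderiv ℝ f x₀) < ε/2 :=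
      hball (lt_of_lt_of_le (Metric.mem_ball.1 hv) (min_le_left _ _))
    have h2 : dist (fderiv ℝ f u) (fderiv ℝ f x₀) < ε/2 :=
      hball (lt_of_lt_of_le (Metric.mem_ball.1 hu) (min_le_left _ _))
    calc ‖fderiv ℝ f v - fderiv ℝ f u‖
        ≤ dist (fderiv ℝ f v) (fderiv ℝ f x₀) + dist (fderiv ℝ f u) (fderiv ℝ f x₀) := by
          rw [dist_eq_norm, dist_eq_norm]
          have := norm_sub_le (fderiv ℝ f v - fderiv ℝ f x₀) (fderiv ℝ f u - fderiv ℝ f x₀)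
          simpa using this
      _ ≤ ε := by linarith

end helpers

variable {n1 n2 : ℕ}

/-- Flattening a pair of vectors into a `Sum`-indexed vector. -/
def flat (v : (Fin n1 → ℝ) × (Fin n2 → ℝ)) : Fin n1 ⊕ Fin n2 → ℝ := Sum.elim v.1 v.2

@[simp] lemma flat_inl (v : (Fin n1 → ℝ) × (Fin n2 → ℝ)) (i : Fin n1) :
    flat v (Sum.inl i) = v.1 i := rfl
@[simp] lemma flat_inr (v : (Fin n1 → ℝ) × (Fin n2 → ℝ)) (i : Fin n2) :
    flat v (Sum.inr i) = v.2 i := rfl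

lemma flat_zero : flat (0 : (Fin n1 → ℝ) × (Fin n2 → ℝ)) = 0 := by
  funext i; cases i <;> rfl

lemma flat_sub (v w : (Fin n1 → ℝ) × (Fin n2 → ℝ)) : flat (v - w) = flat v - flat w := by
  funext i; cases i <;> rfl

lemma flat_eq_zero {v : (Fin n1 → ℝ) × (Fin n2 → ℝ)} (h : flat v = 0) : v = 0 :=
  Prod.ext (funext fun i => congrFun h (Sum.inl i)) (funext fun i => congrFun h (Sum.inr i))

lemma norm_flat (v : (Fin n1 → ℝ) × (Fin n2 → ℝ)) : ‖flat v‖ = ‖v‖ := by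
  refine le_antisymm ?_ ?_
  · refine (pi_norm_le_iff_of_nonneg (norm_nonneg v)).2 fun j => ?_
    cases j with
    | inl i => exact (norm_le_pi_norm v.1 i).trans (norm_fst_le v)
    | inr i => exact (norm_le_pi_norm v.2 i).trans (norm_snd_le v)
  · rw [Prod.norm_def]
    refine max_le ?_ ?_
    · refine (pi_norm_le_iff_of_nonneg (norm_nonneg _)).2 fun i => ?_
      exact norm_le_pi_norm (flat v) (Sum.inl i)
    · refine (pi_norm_le_iff_of_nonneg (norm_nonneg _)).2 fun i => ?_
      exact norm_le_pi_norm (flat v) (Sum.inr i)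

lemma cFlat : Continuous (flat (n1 := n1) (n2 := n2)) := by
  refine continuous_pi fun j => ?_
  cases j with
  | inl i => exact (continuous_apply i).comp continuous_fst
  | inr i => exact (continuous_apply i).comp continuous_snd

lemma flat_basisP (j : Fin n1 ⊕ Fin n2) : flat (basisP j) = Pi.single j 1 := by
  funext i
  cases j with
  | inl j1 => cases i with
    | inl i1 => simp [basisP, flat, Pi.single_apply, Sum.inl.injEq]
    | inr i2 => simp [basisP, flat, Pi.single_apply]
  | inr j2 => cases i with
    | inl i1 => simp [basisP, flat, Pi.single_apply]
    | inr i2 => simp [basisP, flat, Pi.single_apply, Sum.inr.injEq]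

lemma sum_flat_smul_basisP (v : (Fin n1 → ℝ) × (Fin n2 → ℝ)) :
    ∑ j : Fin n1 ⊕ Fin n2, flat v j • basisP j = v := by
  rw [Fintype.sum_sum_type]
  refine Prod.ext ?_ ?_ <;>
    simp only [Prod.fst_sum, Prod.snd_sum, basisP, Sum.elim_inl, Sum.elim_inr, flat_inl, flat_inr,
      Prod.smul_mk, smul_zero, Prod.fst_add, Prod.snd_add, Prod.mk_add_mk] <;>
    simp [Finset.univ_sum_single]
  · funext i
    simp [Finset.sum_apply, Pi.single_apply, mul_ite]
  · funext i
    simp [Finset.sum_apply, Pi.single_apply, mul_ite]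

lemma clm_apply_eq_sum {W : Type*} [NormedAddCommGroup W] [NormedSpace ℝ W]
    (L : ((Fin n1 → ℝ) × (Fin n2 → ℝ)) →L[ℝ] W) (v : (Fin n1 → ℝ) × (Fin n2 → ℝ)) :
    L v = ∑ j : Fin n1 ⊕ Fin n2, flat v j • L (basisP j) := by
  conv_lhs => rw [← sum_flat_smul_basisP v]
  rw [map_sum]
  simp

lemma fderiv_apply_grad (f : ((Fin n1 → ℝ) × (Fin n2 → ℝ)) → ℝ)
    (x v : (Fin n1 → ℝ) × (Fin n2 → ℝ)) :
    fderiv ℝ f x v = gradP f x ⬝ᵥ flat v := by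
  rw [clm_apply_eq_sum (fderiv ℝ f x) v, dotProduct_comm]
  simp [dotProduct, gradP, smul_eq_mul]

lemma jacP_mulVec (f : ((Fin n1 → ℝ) × (Fin n2 → ℝ)) → ((Fin n1 → ℝ) × (Fin n2 → ℝ)))
    (x v : (Fin n1 → ℝ) × (Fin n2 → ℝ)) :
    jacP f x *ᵥ flat v = flat (fderiv ℝ f x v) := by
  funext i
  rw [clm_apply_eq_sum (fderiv ℝ f x) v]
  have h : flat (∑ j : Fin n1 ⊕ Fin n2, flat v j • fderiv ℝ f x (basisP j)) i
      = ∑ j : Fin n1 ⊕ Fin n2, flat v j * flat (fderiv ℝ f x (basisP j)) i := by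
    cases i <;> simp [flat, Prod.fst_sum, Prod.snd_sum, Finset.sum_apply]
  rw [h, mulVec, dotProduct]
  refine Finset.sum_congr rfl fun j _ => ?_
  rw [mul_comm]
  rfl

lemma contOn_jacP {X : Set ((Fin n1 → ℝ) × (Fin n2 → ℝ))} (hX : IsOpen X)
    {f : ((Fin n1 → ℝ) × (Fin n2 → ℝ)) → ((Fin n1 → ℝ) × (Fin n2 → ℝ))}
    (hf : ContDiffOn ℝ 1 f X) : ContinuousOn (jacP f) X := by
  have h := hf.continuousOn_fderiv_of_isOpen hX le_rfl
  have happ : ∀ j : Fin n1 ⊕ Fin n2,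
      ContinuousOn (fun x => fderiv ℝ f x (basisP j)) X := fun j =>
    (ContinuousLinearMap.apply ℝ ((Fin n1 → ℝ) × (Fin n2 → ℝ))
      (basisP j)).continuous.comp_continuousOn h
  refine continuousOn_pi.2 fun i => continuousOn_pi.2 fun j => ?_
  show ContinuousOn
    (fun x => Sum.elim (fderiv ℝ f x (basisP j)).1 (fderiv ℝ f x (basisP j)).2 i) X
  cases i with
  | inl i1 => exact ((continuous_apply i1).comp continuous_fst).comp_continuousOn (happ j)
  | inr i2 => exact ((continuous_apply i2).comp continuous_snd).comp_continuousOn (happ j)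

/-- Generalized-Gonzalez discrete Jacobian of `ψ`. -/
noncomputable def psibar (ψ : ((Fin n1 → ℝ) × (Fin n2 → ℝ)) → ((Fin n1 → ℝ) × (Fin n2 → ℝ)))
    (x x' : (Fin n1 → ℝ) × (Fin n2 → ℝ)) : Matrix (Fin n1 ⊕ Fin n2) (Fin n1 ⊕ Fin n2) ℝ :=
  Matrix.of fun i j => jacP ψ x i j +
    (flat (ψ x' - ψ x) i - (jacP ψ x *ᵥ flat (x' - x)) i) * flat (x' - x) j
      / (flat (x' - x) ⬝ᵥ flat (x' - x))

lemma psibar_diag (ψ) (x : (Fin n1 → ℝ) × (Fin n2 → ℝ)) : psibar ψ x x = jacP ψ x := by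
  funext i j
  simp [psibar, sub_self, flat_zero]

lemma psibar_mulVec (ψ) (x x' : (Fin n1 → ℝ) × (Fin n2 → ℝ)) :
    psibar ψ x x' *ᵥ flat (x' - x) = flat (ψ x' - ψ x) := by
  by_cases h : flat (x' - x) = 0
  · have hx : x' = x := by have := flat_eq_zero h; rwa [sub_eq_zero] at this
    subst hx
    simp [h, flat_zero, sub_self]
  · have hdd : flat (x' - x) ⬝ᵥ flat (x' - x) ≠ 0 := by
      rwa [Ne, dotProduct_self_eq_zero]
    funext i
    have hterm : ∀ j, (jacP ψ x i j +
        (flat (ψ x' - ψ x) i - (jacP ψ x *ᵥ flat (x' - x)) i) * flat (x' - x) j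
          / (flat (x' - x) ⬝ᵥ flat (x' - x))) * flat (x' - x) j
        = jacP ψ x i j * flat (x' - x) j +
          (flat (ψ x' - ψ x) i - (jacP ψ x *ᵥ flat (x' - x)) i)
            / (flat (x' - x) ⬝ᵥ flat (x' - x)) * (flat (x' - x) j * flat (x' - x) j) := by
      intro j; ring
    rw [mulVec, dotProduct]
    simp only [psibar, Matrix.of_apply, hterm]
    rw [Finset.sum_add_distrib, ← Finset.mul_sum]
    have hsum : ∑ j, flat (x' - x) j * flat (x' - x) j = flat (x' - x) ⬝ᵥ flat (x' - x) := rfl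
    rw [hsum, div_mul_cancel₀ _ hdd]
    have hmv : ∑ j, jacP ψ x i j * flat (x' - x) j = (jacP ψ x *ᵥ flat (x' - x)) i := rfl
    rw [hmv]
    ring

/-- Gonzalez-type discrete gradient in the first block of variables. -/
noncomputable def phibar (Ht : ((Fin n1 → ℝ) × (Fin n2 → ℝ)) → ℝ)
    (G1 : ((Fin n1 → ℝ) × (Fin n2 → ℝ)) → Fin n1 → ℝ)
    (a b : Fin n1 → ℝ) (c : Fin n2 → ℝ) : Fin n1 → ℝ :=
  G1 (a, c) + ((Ht (b, c) - Ht (a, c) - G1 (a, c) ⬝ᵥ (b - a)) / ((b - a) ⬝ᵥ (b - a))) • (b - a)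

lemma phibar_diag (Ht G1) (a : Fin n1 → ℝ) (c : Fin n2 → ℝ) :
    phibar (n1 := n1) (n2 := n2) Ht G1 a a c = G1 (a, c) := by
  simp [phibar, sub_self]

lemma phibar_dot (Ht G1) (a b : Fin n1 → ℝ) (c : Fin n2 → ℝ) :
    phibar (n1 := n1) (n2 := n2) Ht G1 a b c ⬝ᵥ (b - a) = Ht (b, c) - Ht (a, c) := by
  by_cases h : b = a
  · subst h; simp [phibar, sub_self]
  · have hba : b - a ≠ 0 := sub_ne_zero.2 h
    have hdd : (b - a) ⬝ᵥ (b - a) ≠ 0 := by rwa [Ne, dotProduct_self_eq_zero]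
    rw [phibar, add_dotProduct, smul_dotProduct, smul_eq_mul, div_mul_cancel₀ _ hdd]
    ring

lemma psibar_contOn {X : Set ((Fin n1 → ℝ) × (Fin n2 → ℝ))} (hX : IsOpen X)
    {ψ : ((Fin n1 → ℝ) × (Fin n2 → ℝ)) → ((Fin n1 → ℝ) × (Fin n2 → ℝ))}
    (hψ : ContDiffOn ℝ 1 ψ X) :
    ContinuousOn (fun p : ((Fin n1 → ℝ) × (Fin n2 → ℝ)) × ((Fin n1 → ℝ) × (Fin n2 → ℝ)) =>
      psibar ψ p.1 p.2) (X ×ˢ X) := by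
  have hjac : ContinuousOn (jacP ψ) X := contOn_jacP hX hψ
  have hψc : ContinuousOn ψ X := hψ.continuousOn
  have hjacq : ContinuousOn (fun q : ((Fin n1 → ℝ) × (Fin n2 → ℝ)) × _ => jacP ψ q.1) (X ×ˢ X) :=
    hjac.comp continuous_fst.continuousOn fun q hq => hq.1
  have hψ2 : ContinuousOn (fun q : ((Fin n1 → ℝ) × (Fin n2 → ℝ)) × _ => ψ q.2) (X ×ˢ X) :=
    hψc.comp continuous_snd.continuousOn fun q hq => hq.2
  have hψ1 : ContinuousOn (fun q : ((Fin n1 → ℝ) × (Fin n2 → ℝ)) × _ => ψ q.1) (X ×ˢ X) :=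
    hψc.comp continuous_fst.continuousOn fun q hq => hq.1
  have hdq : Continuous (fun q : ((Fin n1 → ℝ) × (Fin n2 → ℝ)) ×
      ((Fin n1 → ℝ) × (Fin n2 → ℝ)) => flat (q.2 - q.1)) :=
    cFlat.comp (continuous_snd.sub continuous_fst)
  have hnum : ContinuousOn (fun q : ((Fin n1 → ℝ) × (Fin n2 → ℝ)) × _ =>
      flat (ψ q.2 - ψ q.1) - jacP ψ q.1 *ᵥ flat (q.2 - q.1)) (X ×ˢ X) :=
    (cFlat.comp_continuousOn (hψ2.sub hψ1)).sub
      (cMulVec.comp_continuousOn (hjacq.prodMk hdq.continuousOn))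
  have hddc : Continuous (fun q : ((Fin n1 → ℝ) × (Fin n2 → ℝ)) ×
      ((Fin n1 → ℝ) × (Fin n2 → ℝ)) => flat (q.2 - q.1) ⬝ᵥ flat (q.2 - q.1)) :=
    cDot.comp (hdq.prodMk hdq)
  intro p hp
  have hp1 : p.1 ∈ X := hp.1
  have hp2 : p.2 ∈ X := hp.2
  by_cases hpe : p.2 = p.1
  · -- diagonal point
    have hval : psibar ψ p.1 p.2 = jacP ψ p.1 := by rw [hpe, psibar_diag]
    have hsplit : ∀ q : ((Fin n1 → ℝ) × (Fin n2 → ℝ)) × ((Fin n1 → ℝ) × (Fin n2 → ℝ)),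
        psibar ψ q.1 q.2 = jacP ψ q.1 + Matrix.of (fun i j =>
          (flat (ψ q.2 - ψ q.1) - jacP ψ q.1 *ᵥ flat (q.2 - q.1)) i * flat (q.2 - q.1) j
            / (flat (q.2 - q.1) ⬝ᵥ flat (q.2 - q.1))) := by
      intro q; funext i j
      simp [psibar, Matrix.add_apply, Pi.sub_apply]
    have h1 : Filter.Tendsto (fun q : ((Fin n1 → ℝ) × (Fin n2 → ℝ)) × _ => jacP ψ q.1)
        (nhdsWithin p (X ×ˢ X)) (nhds (jacP ψ p.1)) := hjacq p hp
    have h2 : Filter.Tendsto (fun q : ((Fin n1 → ℝ) × (Fin n2 → ℝ)) ×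
        ((Fin n1 → ℝ) × (Fin n2 → ℝ)) => Matrix.of (fun i j =>
          (flat (ψ q.2 - ψ q.1) - jacP ψ q.1 *ᵥ flat (q.2 - q.1)) i * flat (q.2 - q.1) j
            / (flat (q.2 - q.1) ⬝ᵥ flat (q.2 - q.1))))
        (nhdsWithin p (X ×ˢ X)) (nhds (0 : Matrix (Fin n1 ⊕ Fin n2) (Fin n1 ⊕ Fin n2) ℝ)) := by
      refine tendsto_pi_nhds.2 fun i => tendsto_pi_nhds.2 fun j => ?_
      rw [Metric.tendsto_nhds]
      intro ε hε
      obtain ⟨δ, hδ, hballX, htay⟩ := taylor_est hX hψ hp1 (half_pos hε)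
      have hmem : Metric.ball p.1 δ ×ˢ Metric.ball p.1 δ ∈ nhdsWithin p (X ×ˢ X) :=
        mem_nhdsWithin_of_mem_nhds ((Metric.isOpen_ball.prod Metric.isOpen_ball).mem_nhds
          ⟨Metric.mem_ball_self hδ, by rw [hpe]; exact Metric.mem_ball_self hδ⟩)
      filter_upwards [hmem] with q hq
      obtain ⟨hq1, hq2⟩ := hq
      rw [Real.dist_eq]
      simp only [Matrix.zero_apply, Matrix.of_apply, sub_zero, Pi.zero_apply]
      by_cases h0 : flat (q.2 - q.1) = 0
      · simp only [h0, Pi.zero_apply, mul_zero, zero_div, abs_zero]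
        exact hε
      · set s := ‖flat (q.2 - q.1)‖ with hs_def
        have hs : 0 < s := norm_pos_iff.2 h0
        have hww : ‖ψ q.2 - ψ q.1 - fderiv ℝ ψ q.1 (q.2 - q.1)‖ ≤ ε/2 * ‖q.2 - q.1‖ :=
          htay q.1 hq1 q.2 hq2
        have hnum_i : |(flat (ψ q.2 - ψ q.1) - jacP ψ q.1 *ᵥ flat (q.2 - q.1)) i| ≤ ε/2 * s := by
          have heq : flat (ψ q.2 - ψ q.1) - jacP ψ q.1 *ᵥ flat (q.2 - q.1)
              = flat (ψ q.2 - ψ q.1 - fderiv ℝ ψ q.1 (q.2 - q.1)) := by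
            rw [jacP_mulVec, ← flat_sub]
          rw [heq]
          calc |flat (ψ q.2 - ψ q.1 - fderiv ℝ ψ q.1 (q.2 - q.1)) i|
              ≤ ‖flat (ψ q.2 - ψ q.1 - fderiv ℝ ψ q.1 (q.2 - q.1))‖ := by
                rw [← Real.norm_eq_abs]; exact norm_le_pi_norm _ i
            _ = ‖ψ q.2 - ψ q.1 - fderiv ℝ ψ q.1 (q.2 - q.1)‖ := norm_flat _
            _ ≤ ε/2 * ‖q.2 - q.1‖ := hww
            _ = ε/2 * s := by rw [hs_def, norm_flat]
        have hD : s ^ 2 ≤ flat (q.2 - q.1) ⬝ᵥ flat (q.2 - q.1) := sq_norm_le_dot _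
        have hdd0 : 0 < flat (q.2 - q.1) ⬝ᵥ flat (q.2 - q.1) :=
          lt_of_lt_of_le (pow_pos hs 2) hD
        have habs_j : |flat (q.2 - q.1) j| ≤ s := by
          rw [← Real.norm_eq_abs]; exact norm_le_pi_norm _ j
        have hεs : (0:ℝ) ≤ ε/2 := le_of_lt (half_pos hε)
        calc |(flat (ψ q.2 - ψ q.1) - jacP ψ q.1 *ᵥ flat (q.2 - q.1)) i * flat (q.2 - q.1) j
              / (flat (q.2 - q.1) ⬝ᵥ flat (q.2 - q.1))|
            = |(flat (ψ q.2 - ψ q.1) - jacP ψ q.1 *ᵥ flat (q.2 - q.1)) i| * |flat (q.2 - q.1) j|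
              / (flat (q.2 - q.1) ⬝ᵥ flat (q.2 - q.1)) := by
              rw [abs_div, abs_mul, abs_of_pos hdd0]
          _ ≤ (ε/2 * s) * s / (flat (q.2 - q.1) ⬝ᵥ flat (q.2 - q.1)) := by
              gcongr
          _ = (ε/2) * s ^ 2 / (flat (q.2 - q.1) ⬝ᵥ flat (q.2 - q.1)) := by ring_nf
          _ ≤ (ε/2) * (flat (q.2 - q.1) ⬝ᵥ flat (q.2 - q.1))
              / (flat (q.2 - q.1) ⬝ᵥ flat (q.2 - q.1)) := by gcongr
          _ = ε/2 := by rw [mul_div_assoc, div_self hdd0.ne', mul_one]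
          _ < ε := by linarith
    have hfin := h1.add h2
    rw [add_zero] at hfin
    have hfinal := Filter.Tendsto.congr (fun q => (hsplit q).symm) hfin
    simpa [ContinuousWithinAt, hval] using hfinal
  · -- off-diagonal point
    have hdne : flat (p.2 - p.1) ⬝ᵥ flat (p.2 - p.1) ≠ 0 := by
      rw [Ne, dotProduct_self_eq_zero]
      intro hzero
      exact hpe (by have := flat_eq_zero hzero; rwa [sub_eq_zero] at this)
    have : ContinuousWithinAt (fun q : ((Fin n1 → ℝ) × (Fin n2 → ℝ)) ×
        ((Fin n1 → ℝ) × (Fin n2 → ℝ)) => psibar ψ q.1 q.2) (X ×ˢ X) p := by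
      apply continuousWithinAt_pi.2
      intro i
      apply continuousWithinAt_pi.2
      intro j
      show ContinuousWithinAt (fun q : ((Fin n1 → ℝ) × (Fin n2 → ℝ)) ×
        ((Fin n1 → ℝ) × (Fin n2 → ℝ)) => jacP ψ q.1 i j +
          (flat (ψ q.2 - ψ q.1) - jacP ψ q.1 *ᵥ flat (q.2 - q.1)) i * flat (q.2 - q.1) j
            / (flat (q.2 - q.1) ⬝ᵥ flat (q.2 - q.1))) (X ×ˢ X) p
      refine ContinuousWithinAt.add ?_ (ContinuousWithinAt.div ?_ (hddc.continuousWithinAt) hdne)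
      · exact ((cEntry i j).comp_continuousOn hjacq) p hp
      · exact (((continuous_apply i).comp_continuousOn hnum) p hp).mul
          (((continuous_apply j).comp hdq).continuousWithinAt)
    exact this

lemma phibar_contOn {Xt1 : Set (Fin n1 → ℝ)} {Xt2 : Set (Fin n2 → ℝ)}
    (hXt1 : IsOpen Xt1) (hXt2 : IsOpen Xt2)
    {Ht : ((Fin n1 → ℝ) × (Fin n2 → ℝ)) → ℝ} (hHt : ContDiffOn ℝ 1 Ht (Xt1 ×ˢ Xt2))
    {G1 : ((Fin n1 → ℝ) × (Fin n2 → ℝ)) → Fin n1 → ℝ}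
    (hG1c : ContinuousOn G1 (Xt1 ×ˢ Xt2))
    (hgrad : ∀ u ∈ Xt1 ×ˢ Xt2, ∀ w : Fin n1 → ℝ,
      fderiv ℝ Ht u (w, 0) = G1 u ⬝ᵥ w) :
    ContinuousOn (fun q : (Fin n1 → ℝ) × (Fin n1 → ℝ) × (Fin n2 → ℝ) =>
      phibar Ht G1 q.1 q.2.1 q.2.2) (Xt1 ×ˢ Xt1 ×ˢ Xt2) := by
  have hXt : IsOpen (Xt1 ×ˢ Xt2) := hXt1.prod hXt2
  have hHtc : ContinuousOn Ht (Xt1 ×ˢ Xt2) := hHt.continuousOn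
  have hmap1 : MapsTo (fun q : (Fin n1 → ℝ) × (Fin n1 → ℝ) × (Fin n2 → ℝ) => (q.1, q.2.2))
      (Xt1 ×ˢ Xt1 ×ˢ Xt2) (Xt1 ×ˢ Xt2) := fun q hq => ⟨hq.1, hq.2.2⟩
  have hmap2 : MapsTo (fun q : (Fin n1 → ℝ) × (Fin n1 → ℝ) × (Fin n2 → ℝ) => (q.2.1, q.2.2))
      (Xt1 ×ˢ Xt1 ×ˢ Xt2) (Xt1 ×ˢ Xt2) := fun q hq => ⟨hq.2.1, hq.2.2⟩
  have hc1 : Continuous (fun q : (Fin n1 → ℝ) × (Fin n1 → ℝ) × (Fin n2 → ℝ) => (q.1, q.2.2)) :=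
    continuous_fst.prodMk (continuous_snd.snd)
  have hc2 : Continuous (fun q : (Fin n1 → ℝ) × (Fin n1 → ℝ) × (Fin n2 → ℝ) => (q.2.1, q.2.2)) :=
    (continuous_snd.fst).prodMk continuous_snd.snd
  have hG1q : ContinuousOn (fun q : (Fin n1 → ℝ) × (Fin n1 → ℝ) × (Fin n2 → ℝ) =>
      G1 (q.1, q.2.2)) (Xt1 ×ˢ Xt1 ×ˢ Xt2) := hG1c.comp hc1.continuousOn hmap1
  have hHta : ContinuousOn (fun q : (Fin n1 → ℝ) × (Fin n1 → ℝ) × (Fin n2 → ℝ) =>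
      Ht (q.1, q.2.2)) (Xt1 ×ˢ Xt1 ×ˢ Xt2) := hHtc.comp hc1.continuousOn hmap1
  have hHtb : ContinuousOn (fun q : (Fin n1 → ℝ) × (Fin n1 → ℝ) × (Fin n2 → ℝ) =>
      Ht (q.2.1, q.2.2)) (Xt1 ×ˢ Xt1 ×ˢ Xt2) := hHtc.comp hc2.continuousOn hmap2
  have hdq : Continuous (fun q : (Fin n1 → ℝ) × (Fin n1 → ℝ) × (Fin n2 → ℝ) => q.2.1 - q.1) :=
    continuous_snd.fst.sub continuous_fst
  have hddq : Continuous (fun q : (Fin n1 → ℝ) × (Fin n1 → ℝ) × (Fin n2 → ℝ) =>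
      (q.2.1 - q.1) ⬝ᵥ (q.2.1 - q.1)) := cDot.comp (hdq.prodMk hdq)
  have hnumc : ContinuousOn (fun q : (Fin n1 → ℝ) × (Fin n1 → ℝ) × (Fin n2 → ℝ) =>
      Ht (q.2.1, q.2.2) - Ht (q.1, q.2.2) - G1 (q.1, q.2.2) ⬝ᵥ (q.2.1 - q.1))
      (Xt1 ×ˢ Xt1 ×ˢ Xt2) :=
    (hHtb.sub hHta).sub (cDot.comp_continuousOn (hG1q.prodMk hdq.continuousOn))
  intro p hp
  have hp1 : p.1 ∈ Xt1 := hp.1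
  have hp21 : p.2.1 ∈ Xt1 := hp.2.1
  have hp22 : p.2.2 ∈ Xt2 := hp.2.2
  by_cases hpe : p.2.1 = p.1
  · -- diagonal point
    have hval : phibar Ht G1 p.1 p.2.1 p.2.2 = G1 (p.1, p.2.2) := by rw [hpe, phibar_diag]
    have h1 : Filter.Tendsto (fun q : (Fin n1 → ℝ) × (Fin n1 → ℝ) × (Fin n2 → ℝ) =>
        G1 (q.1, q.2.2)) (nhdsWithin p (Xt1 ×ˢ Xt1 ×ˢ Xt2)) (nhds (G1 (p.1, p.2.2))) := hG1q p hp
    have h2 : Filter.Tendsto (fun q : (Fin n1 → ℝ) × (Fin n1 → ℝ) × (Fin n2 → ℝ) =>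
        ((Ht (q.2.1, q.2.2) - Ht (q.1, q.2.2) - G1 (q.1, q.2.2) ⬝ᵥ (q.2.1 - q.1))
          / ((q.2.1 - q.1) ⬝ᵥ (q.2.1 - q.1))) • (q.2.1 - q.1))
        (nhdsWithin p (Xt1 ×ˢ Xt1 ×ˢ Xt2)) (nhds 0) := by
      rw [Metric.tendsto_nhds]
      intro ε hε
      obtain ⟨δ, hδ, hball, htay⟩ := taylor_est hXt hHt
        (show (p.1, p.2.2) ∈ Xt1 ×ˢ Xt2 from ⟨hp1, hp22⟩) (half_pos hε)
      have hmem : Metric.ball p.1 δ ×ˢ (Metric.ball p.1 δ ×ˢ Metric.ball p.2.2 δ)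
          ∈ nhdsWithin p (Xt1 ×ˢ Xt1 ×ˢ Xt2) :=
        mem_nhdsWithin_of_mem_nhds
          ((Metric.isOpen_ball.prod (Metric.isOpen_ball.prod Metric.isOpen_ball)).mem_nhds
            ⟨Metric.mem_ball_self hδ,
              by rw [hpe]; exact Metric.mem_ball_self hδ, Metric.mem_ball_self hδ⟩)
      filter_upwards [hmem] with q hq
      obtain ⟨hqa, hqb, hqc⟩ := hq
      rw [dist_zero_right]
      by_cases h0 : q.2.1 - q.1 = 0
      · simp only [h0, smul_zero, norm_zero]
        exact hε
      · have hs : 0 < ‖q.2.1 - q.1‖ := norm_pos_iff.2 h0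
        have hu : (q.1, q.2.2) ∈ Metric.ball ((p.1, p.2.2) : (Fin n1 → ℝ) × (Fin n2 → ℝ)) δ := by
          rw [Metric.mem_ball, Prod.dist_eq]
          exact max_lt hqa hqc
        have hu' : (q.2.1, q.2.2) ∈ Metric.ball ((p.1, p.2.2) : (Fin n1 → ℝ) × (Fin n2 → ℝ)) δ := by
          rw [Metric.mem_ball, Prod.dist_eq]
          exact max_lt hqb hqc
        have humem : ((q.1, q.2.2) : (Fin n1 → ℝ) × (Fin n2 → ℝ)) ∈ Xt1 ×ˢ Xt2 := hball hu
        have hsub : ((q.2.1, q.2.2) : (Fin n1 → ℝ) × (Fin n2 → ℝ)) - (q.1, q.2.2)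
            = (q.2.1 - q.1, 0) := by
          rw [Prod.mk_sub_mk, sub_self]
        have hnormsub : ‖((q.2.1 - q.1 : Fin n1 → ℝ), (0 : Fin n2 → ℝ))‖ = ‖q.2.1 - q.1‖ := by
          rw [Prod.norm_def]
          simp [max_eq_left (norm_nonneg _)]
        have hnum_bound : |Ht (q.2.1, q.2.2) - Ht (q.1, q.2.2) - G1 (q.1, q.2.2) ⬝ᵥ (q.2.1 - q.1)|
            ≤ ε/2 * ‖q.2.1 - q.1‖ := by
          have h := htay (q.1, q.2.2) hu (q.2.1, q.2.2) hu'
          rw [hsub, hgrad _ humem (q.2.1 - q.1), hnormsub, Real.norm_eq_abs] at h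
          exact h
        have hD : ‖q.2.1 - q.1‖ ^ 2 ≤ (q.2.1 - q.1) ⬝ᵥ (q.2.1 - q.1) := sq_norm_le_dot _
        have hdd0 : 0 < (q.2.1 - q.1) ⬝ᵥ (q.2.1 - q.1) := lt_of_lt_of_le (pow_pos hs 2) hD
        calc ‖((Ht (q.2.1, q.2.2) - Ht (q.1, q.2.2) - G1 (q.1, q.2.2) ⬝ᵥ (q.2.1 - q.1))
              / ((q.2.1 - q.1) ⬝ᵥ (q.2.1 - q.1))) • (q.2.1 - q.1)‖
            = |Ht (q.2.1, q.2.2) - Ht (q.1, q.2.2) - G1 (q.1, q.2.2) ⬝ᵥ (q.2.1 - q.1)|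
              / ((q.2.1 - q.1) ⬝ᵥ (q.2.1 - q.1)) * ‖q.2.1 - q.1‖ := by
              rw [norm_smul, Real.norm_eq_abs, abs_div, abs_of_pos hdd0]
          _ ≤ (ε/2 * ‖q.2.1 - q.1‖) / ((q.2.1 - q.1) ⬝ᵥ (q.2.1 - q.1)) * ‖q.2.1 - q.1‖ := by
              gcongr
          _ = ε/2 * (‖q.2.1 - q.1‖ ^ 2) / ((q.2.1 - q.1) ⬝ᵥ (q.2.1 - q.1)) := by ring
          _ ≤ ε/2 * ((q.2.1 - q.1) ⬝ᵥ (q.2.1 - q.1)) / ((q.2.1 - q.1) ⬝ᵥ (q.2.1 - q.1)) := by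
              gcongr
          _ = ε/2 := by rw [mul_div_assoc, div_self hdd0.ne', mul_one]
          _ < ε := by linarith
    have hfin := h1.add h2
    rw [add_zero] at hfin
    have hsplit : ∀ q : (Fin n1 → ℝ) × (Fin n1 → ℝ) × (Fin n2 → ℝ),
        phibar Ht G1 q.1 q.2.1 q.2.2 = G1 (q.1, q.2.2) +
          ((Ht (q.2.1, q.2.2) - Ht (q.1, q.2.2) - G1 (q.1, q.2.2) ⬝ᵥ (q.2.1 - q.1))
            / ((q.2.1 - q.1) ⬝ᵥ (q.2.1 - q.1))) • (q.2.1 - q.1) := fun q => rfl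
    have hfinal := Filter.Tendsto.congr (fun q => (hsplit q).symm) hfin
    simpa [ContinuousWithinAt, hval] using hfinal
  · -- off-diagonal point
    have hdne : (p.2.1 - p.1) ⬝ᵥ (p.2.1 - p.1) ≠ 0 := by
      rw [Ne, dotProduct_self_eq_zero]
      exact fun hz => hpe (sub_eq_zero.1 hz)
    show ContinuousWithinAt (fun q : (Fin n1 → ℝ) × (Fin n1 → ℝ) × (Fin n2 → ℝ) =>
      G1 (q.1, q.2.2) +
        ((Ht (q.2.1, q.2.2) - Ht (q.1, q.2.2) - G1 (q.1, q.2.2) ⬝ᵥ (q.2.1 - q.1))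
          / ((q.2.1 - q.1) ⬝ᵥ (q.2.1 - q.1))) • (q.2.1 - q.1)) (Xt1 ×ˢ Xt1 ×ˢ Xt2) p
    exact (hG1q p hp).add
      (((hnumc p hp).div hddq.continuousWithinAt hdne).smul hdq.continuousWithinAt)

lemma inv_transpose_dot {k : Type*} [Fintype k] [DecidableEq k] (A : Matrix k k ℝ)
    (hA : IsUnit A.det) (u w : k → ℝ) : ((Aᵀ)⁻¹ *ᵥ u) ⬝ᵥ (A *ᵥ w) = u ⬝ᵥ w := by
  rw [dotProduct_mulVec, ← Matrix.mulVec_transpose, Matrix.mulVec_mulVec,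
    Matrix.mul_nonsing_inv _ (by rwa [Matrix.det_transpose]), Matrix.one_mulVec]

lemma mulVec_inv_transpose_dot {k : Type*} [Fintype k] [DecidableEq k] (A : Matrix k k ℝ)
    (hA : IsUnit A.det) (u w : k → ℝ) : (A *ᵥ u) ⬝ᵥ ((Aᵀ)⁻¹ *ᵥ w) = u ⬝ᵥ w := by
  rw [dotProduct_comm, inv_transpose_dot A hA w u, dotProduct_comm]

lemma contOn_fromBlocks {α : Type*} [TopologicalSpace α] {s : Set α}
    {f : α → Matrix (Fin n1) (Fin n1) ℝ} (hf : ContinuousOn f s) :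
    ContinuousOn (fun x => (Matrix.fromBlocks (f x) 0 0 0 :
      Matrix (Fin n1 ⊕ Fin n2) (Fin n1 ⊕ Fin n2) ℝ)) s := by
  refine continuousOn_pi.2 fun i => continuousOn_pi.2 fun j => ?_
  cases i with
  | inl i1 =>
    cases j with
    | inl j1 =>
      show ContinuousOn (fun x => f x i1 j1) s
      exact (cEntry i1 j1).comp_continuousOn hf
    | inr j2 => exact continuousOn_const
  | inr i2 => cases j with
    | inl j1 => exact continuousOn_const
    | inr j2 => exact continuousOn_const

end DGaux

set_option maxHeartbeats 4000000 in
open DGaux in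
/-- if a gradient pair can be transformed into a semi-explicit one by an
invertible system transformation, then it admits a discrete gradient pair. -/
theorem discrete_gradient_pair_from_semiExplicit {n1 n2 : ℕ}
    (X : Set ((Fin n1 → ℝ) × (Fin n2 → ℝ))) (hX : IsOpen X)
    (H : ((Fin n1 → ℝ) × (Fin n2 → ℝ)) → ℝ) (hH : ContDiffOn ℝ 1 H X)
    (E : ((Fin n1 → ℝ) × (Fin n2 → ℝ)) → Matrix (Fin n1 ⊕ Fin n2) (Fin n1 ⊕ Fin n2) ℝ)
    (z : ((Fin n1 → ℝ) × (Fin n2 → ℝ)) → (Fin n1 ⊕ Fin n2 → ℝ))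
    (hEcont : ContinuousOn E X) (hzcont : ContinuousOn z X)
    (hgradpair : ∀ x ∈ X, (E x)ᵀ.mulVec (z x) = gradP H x)
    -- an invertible system transformation mapping into semi-explicit form
    (Xt1 : Set (Fin n1 → ℝ)) (Xt2 : Set (Fin n2 → ℝ))
    (hXt1 : IsOpen Xt1) (hXt2 : IsOpen Xt2) (hXt2conv : Convex ℝ Xt2)
    (φ ψ : ((Fin n1 → ℝ) × (Fin n2 → ℝ)) → ((Fin n1 → ℝ) × (Fin n2 → ℝ)))
    (hφ : ContDiffOn ℝ 1 φ (Xt1 ×ˢ Xt2)) (hφmap : Set.MapsTo φ (Xt1 ×ˢ Xt2) X)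
    (hψ : ContDiffOn ℝ 1 ψ X) (hψmap : Set.MapsTo ψ X (Xt1 ×ˢ Xt2))
    (hψφ : ∀ xt ∈ Xt1 ×ˢ Xt2, ψ (φ xt) = xt) (hφψ : ∀ x ∈ X, φ (ψ x) = x)
    (U : ((Fin n1 → ℝ) × (Fin n2 → ℝ)) → Matrix (Fin n1 ⊕ Fin n2) (Fin n1 ⊕ Fin n2) ℝ)
    (hUcont : ContinuousOn U (Xt1 ×ˢ Xt2))
    (hUinv : ∀ xt ∈ Xt1 ×ˢ Xt2, IsUnit (U xt).det)
    -- the transformed gradient pair is semi-explicit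
    (E11t : ((Fin n1 → ℝ) × (Fin n2 → ℝ)) → Matrix (Fin n1) (Fin n1) ℝ)
    (hE11tcont : ContinuousOn E11t (Xt1 ×ˢ Xt2))
    (hE11tinv : ∀ xt ∈ Xt1 ×ˢ Xt2, IsUnit (E11t xt).det)
    (hsemi : ∀ xt ∈ Xt1 ×ˢ Xt2,
      (U xt)ᵀ * E (φ xt) * jacP φ xt
        = (Matrix.fromBlocks (E11t xt) 0 0 0 :
            Matrix (Fin n1 ⊕ Fin n2) (Fin n1 ⊕ Fin n2) ℝ)) :
    ∃ Ebar zbar, IsDiscreteGradientPairProd X H E z Ebar zbar := by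
  classical
  have hXt : IsOpen (Xt1 ×ˢ Xt2) := hXt1.prod hXt2
  set Ht : ((Fin n1 → ℝ) × (Fin n2 → ℝ)) → ℝ := fun y => H (φ y) with hHt_def
  set ztil : ((Fin n1 → ℝ) × (Fin n2 → ℝ)) → (Fin n1 ⊕ Fin n2 → ℝ) :=
    fun y => (U y)⁻¹ *ᵥ z (φ y) with hztil_def
  set G1 : ((Fin n1 → ℝ) × (Fin n2 → ℝ)) → (Fin n1 → ℝ) :=
    fun y => (E11t y)ᵀ *ᵥ (fun i => ztil y (Sum.inl i)) with hG1_def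
  -- differentiability facts
  have hφdiff : ∀ y ∈ Xt1 ×ˢ Xt2, DifferentiableAt ℝ φ y := fun y hy =>
    (hφ.contDiffAt (hXt.mem_nhds hy)).differentiableAt one_ne_zero
  have hψdiff : ∀ x ∈ X, DifferentiableAt ℝ ψ x := fun x hx =>
    (hψ.contDiffAt (hX.mem_nhds hx)).differentiableAt one_ne_zero
  have hHdiff : ∀ x ∈ X, DifferentiableAt ℝ H x := fun x hx =>
    (hH.contDiffAt (hX.mem_nhds hx)).differentiableAt one_ne_zero
  have hHtcd : ContDiffOn ℝ 1 Ht (Xt1 ×ˢ Xt2) := hH.comp hφ hφmap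
  have hHtdiff : ∀ y ∈ Xt1 ×ˢ Xt2, DifferentiableAt ℝ Ht y := fun y hy =>
    (hHdiff _ (hφmap hy)).comp y (hφdiff y hy)
  have hUdetT : ∀ y ∈ Xt1 ×ˢ Xt2, IsUnit ((U y)ᵀ).det := fun y hy => by
    rw [Matrix.det_transpose]; exact hUinv y hy
  have hE11detT : ∀ y ∈ Xt1 ×ˢ Xt2, IsUnit ((E11t y)ᵀ).det := fun y hy => by
    rw [Matrix.det_transpose]; exact hE11tinv y hy
  -- key algebraic consequence of semi-explicitness
  have hEJ : ∀ y ∈ Xt1 ×ˢ Xt2, E (φ y) * jacP φ y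
      = ((U y)ᵀ)⁻¹ * Matrix.fromBlocks (E11t y) 0 0 0 := by
    intro y hy
    calc E (φ y) * jacP φ y
        = ((U y)ᵀ)⁻¹ * ((U y)ᵀ * (E (φ y) * jacP φ y)) := by
          rw [← Matrix.mul_assoc, Matrix.nonsing_inv_mul _ (hUdetT y hy), Matrix.one_mul]
      _ = ((U y)ᵀ)⁻¹ * Matrix.fromBlocks (E11t y) 0 0 0 := by
          rw [show (U y)ᵀ * (E (φ y) * jacP φ y) = (U y)ᵀ * E (φ y) * jacP φ y from
            (Matrix.mul_assoc _ _ _).symm, hsemi y hy]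
  -- the transformed gradient identity
  have hstar : ∀ y ∈ Xt1 ×ˢ Xt2, ∀ v : (Fin n1 → ℝ) × (Fin n2 → ℝ),
      fderiv ℝ Ht y v = Sum.elim (G1 y) 0 ⬝ᵥ flat v := by
    intro y hy v
    have hyX : φ y ∈ X := hφmap hy
    have hcomp : fderiv ℝ Ht y v = fderiv ℝ H (φ y) (fderiv ℝ φ y v) := by
      have h1 : fderiv ℝ (H ∘ φ) y = (fderiv ℝ H (φ y)).comp (fderiv ℝ φ y) :=
        fderiv_comp y (hHdiff _ hyX) (hφdiff y hy)
      have h2 : fderiv ℝ Ht y = fderiv ℝ (H ∘ φ) y := rfl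
      rw [h2, h1]; rfl
    rw [hcomp, fderiv_apply_grad, ← jacP_mulVec, ← hgradpair _ hyX,
      dotProduct_mulVec, ← Matrix.mulVec_transpose, Matrix.mulVec_mulVec,
      ← Matrix.transpose_mul, hEJ y hy, Matrix.transpose_mul,
      Matrix.transpose_nonsing_inv, Matrix.transpose_transpose,
      Matrix.fromBlocks_transpose, ← Matrix.mulVec_mulVec]
    have hz : (U y)⁻¹ *ᵥ z (φ y)
        = Sum.elim (fun i => ztil y (Sum.inl i)) (fun i => ztil y (Sum.inr i)) :=
      funext fun i => by cases i <;> rfl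
    rw [hz, Matrix.fromBlocks_mulVec]
    simp only [Matrix.transpose_zero, Matrix.zero_mulVec, add_zero, zero_add,
      Sum.elim_comp_inl, hG1_def]
  -- the Hamiltonian in transformed coordinates does not depend on the second block
  have hconst : ∀ a ∈ Xt1, ∀ c ∈ Xt2, ∀ c' ∈ Xt2, Ht (a, c') = Ht (a, c) := by
    intro a ha c hc c' hc'
    have hpath : ∀ t ∈ Icc (0:ℝ) 1, c + t • (c' - c) ∈ Xt2 := by
      intro t ht
      have hmem := hXt2conv hc hc' (by linarith [ht.2] : (0:ℝ) ≤ 1 - t) ht.1 (by ring)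
      have he : c + t • (c' - c) = (1 - t) • c + t • c' := by
        rw [smul_sub, sub_smul, one_smul]; abel
      rwa [he]
    have hg : ∀ t ∈ Icc (0:ℝ) 1, HasDerivAt (fun t : ℝ => Ht (a, c + t • (c' - c))) 0 t := by
      intro t ht
      have hmem : ((a, c + t • (c' - c)) : (Fin n1 → ℝ) × (Fin n2 → ℝ)) ∈ Xt1 ×ˢ Xt2 :=
        ⟨ha, hpath t ht⟩
      have hγ : HasDerivAt (fun t : ℝ => ((a, c + t • (c' - c)) : (Fin n1 → ℝ) × (Fin n2 → ℝ)))
          ((0 : Fin n1 → ℝ), c' - c) t :=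
        (hasDerivAt_const t a).prodMk
          (by simpa using ((hasDerivAt_id t).smul_const (c' - c)).const_add c)
      have htt := (hHtdiff _ hmem).hasFDerivAt.comp_hasDerivAt t hγ
      have h0 : fderiv ℝ Ht (a, c + t • (c' - c)) ((0 : Fin n1 → ℝ), c' - c) = 0 := by
        rw [hstar _ hmem]
        have hfl : flat (((0 : Fin n1 → ℝ), c' - c) : (Fin n1 → ℝ) × (Fin n2 → ℝ))
            = Sum.elim (0 : Fin n1 → ℝ) (c' - c) := rfl
        rw [hfl, sumElim_dotProduct_sumElim]
        simp
      rwa [h0] at htt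
    have hcont : ContinuousOn (fun t : ℝ => Ht (a, c + t • (c' - c))) (Icc (0:ℝ) 1) :=
      fun t ht => ((hg t ht).continuousAt).continuousWithinAt
    have hc10 := constant_of_has_deriv_right_zero hcont
      (fun t ht => ((hg t (Ico_subset_Icc_self ht)).hasDerivWithinAt)) 1
      (right_mem_Icc.2 zero_le_one)
    have e1 : c + (1:ℝ) • (c' - c) = c' := by rw [one_smul]; abel
    have e0 : c + (0:ℝ) • (c' - c) = c := by rw [zero_smul, add_zero]
    rw [e1, e0] at hc10
    exact hc10
  -- the first-block gradient identity
  have hgradW : ∀ u ∈ Xt1 ×ˢ Xt2, ∀ w : Fin n1 → ℝ, fderiv ℝ Ht u (w, 0) = G1 u ⬝ᵥ w := by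
    intro u hu w
    rw [hstar u hu]
    have hfl : flat ((w, 0) : (Fin n1 → ℝ) × (Fin n2 → ℝ)) = Sum.elim w 0 := rfl
    rw [hfl, sumElim_dotProduct_sumElim, zero_dotProduct, add_zero]
  -- chain rule: jacP φ (ψ x) * jacP ψ x = 1
  have hchain : ∀ x ∈ X, jacP φ (ψ x) * jacP ψ x = 1 := by
    intro x hx
    have hy := hψmap hx
    have hfid : fderiv ℝ (φ ∘ ψ) x = ContinuousLinearMap.id ℝ _ := by
      have hev : (φ ∘ ψ) =ᶠ[nhds x] id :=
        Filter.eventuallyEq_of_mem (hX.mem_nhds hx) (fun w hw => hφψ w hw)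
      rw [hev.fderiv_eq, fderiv_id]
    have hfcomp : fderiv ℝ (φ ∘ ψ) x = (fderiv ℝ φ (ψ x)).comp (fderiv ℝ ψ x) :=
      fderiv_comp x (hφdiff _ hy) (hψdiff x hx)
    ext i j
    have hcol : (jacP φ (ψ x) * jacP ψ x) *ᵥ Pi.single j 1 = Pi.single j 1 := by
      rw [← flat_basisP, ← Matrix.mulVec_mulVec, jacP_mulVec, jacP_mulVec]
      have hcb : fderiv ℝ φ (ψ x) (fderiv ℝ ψ x (basisP j)) = basisP j := by
        have h3 : ((fderiv ℝ φ (ψ x)).comp (fderiv ℝ ψ x)) (basisP j)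
            = fderiv ℝ φ (ψ x) (fderiv ℝ ψ x (basisP j)) := rfl
        rw [← h3, ← hfcomp, hfid]
        rfl
      rw [hcb]
    have hce := congrFun hcol i
    simp only [Matrix.mulVec_single_one, Matrix.col_apply] at hce
    rw [hce, Matrix.one_apply, Pi.single_apply]
  -- membership and basic continuity abbreviations
  have hφc : ContinuousOn φ (Xt1 ×ˢ Xt2) := hφ.continuousOn
  have hψc : ContinuousOn ψ X := hψ.continuousOn
  have hztilc : ContinuousOn ztil (Xt1 ×ˢ Xt2) :=
    contOn_mulVec (contOn_matrix_inv hUcont hUinv) (hzcont.comp hφc hφmap)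
  have hztil1c : ContinuousOn (fun y => (fun i => ztil y (Sum.inl i))) (Xt1 ×ˢ Xt2) :=
    continuousOn_pi.2 fun i => (continuous_apply (Sum.inl i : Fin n1 ⊕ Fin n2)).comp_continuousOn hztilc
  have hE11Tc : ContinuousOn (fun y => (E11t y)ᵀ) (Xt1 ×ˢ Xt2) :=
    (Continuous.matrix_transpose continuous_id).comp_continuousOn hE11tcont
  have hG1c : ContinuousOn G1 (Xt1 ×ˢ Xt2) := contOn_mulVec hE11Tc hztil1c
  -- the discrete gradient pair
  refine ⟨fun x x' => ((U (ψ x))ᵀ)⁻¹ * Matrix.fromBlocks (E11t (ψ x)) 0 0 0 * psibar ψ x x',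
    fun x x' => U (ψ x) *ᵥ Sum.elim
      (((E11t (ψ x))ᵀ)⁻¹ *ᵥ phibar Ht G1 (ψ x).1 (ψ x').1 (ψ x).2)
      (fun i => ztil (ψ x) (Sum.inr i)), ?_, ?_, ?_, ?_, ?_⟩
  · -- continuity of Ebar
    have hψ1 : ContinuousOn (fun p : ((Fin n1 → ℝ) × (Fin n2 → ℝ)) ×
        ((Fin n1 → ℝ) × (Fin n2 → ℝ)) => ψ p.1) (X ×ˢ X) :=
      hψc.comp continuous_fst.continuousOn fun p hp => hp.1
    have hmapψ1 : MapsTo (fun p : ((Fin n1 → ℝ) × (Fin n2 → ℝ)) ×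
        ((Fin n1 → ℝ) × (Fin n2 → ℝ)) => ψ p.1) (X ×ˢ X) (Xt1 ×ˢ Xt2) :=
      fun p hp => hψmap hp.1
    have hA : ContinuousOn (fun p : ((Fin n1 → ℝ) × (Fin n2 → ℝ)) ×
        ((Fin n1 → ℝ) × (Fin n2 → ℝ)) =>
        ((U (ψ p.1))ᵀ)⁻¹ * Matrix.fromBlocks (E11t (ψ p.1)) 0 0 0) (X ×ˢ X) := by
      refine contOn_matrix_mul ?_ ?_
      · refine contOn_matrix_inv ?_ ?_
        · exact (Continuous.matrix_transpose continuous_id).comp_continuousOn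
            (hUcont.comp hψ1 hmapψ1)
        · exact fun p hp => hUdetT _ (hψmap hp.1)
      · exact contOn_fromBlocks (hE11tcont.comp hψ1 hmapψ1)
    exact contOn_matrix_mul hA (psibar_contOn hX hψ)
  · -- continuity of zbar
    have hψ1 : ContinuousOn (fun p : ((Fin n1 → ℝ) × (Fin n2 → ℝ)) ×
        ((Fin n1 → ℝ) × (Fin n2 → ℝ)) => ψ p.1) (X ×ˢ X) :=
      hψc.comp continuous_fst.continuousOn fun p hp => hp.1
    have hψ2 : ContinuousOn (fun p : ((Fin n1 → ℝ) × (Fin n2 → ℝ)) ×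
        ((Fin n1 → ℝ) × (Fin n2 → ℝ)) => ψ p.2) (X ×ˢ X) :=
      hψc.comp continuous_snd.continuousOn fun p hp => hp.2
    have hmapψ1 : MapsTo (fun p : ((Fin n1 → ℝ) × (Fin n2 → ℝ)) ×
        ((Fin n1 → ℝ) × (Fin n2 → ℝ)) => ψ p.1) (X ×ˢ X) (Xt1 ×ˢ Xt2) :=
      fun p hp => hψmap hp.1
    have hphibarC := phibar_contOn hXt1 hXt2 hHtcd hG1c hgradW
    have hcmap : ContinuousOn (fun p : ((Fin n1 → ℝ) × (Fin n2 → ℝ)) ×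
        ((Fin n1 → ℝ) × (Fin n2 → ℝ)) => (((ψ p.1).1, ((ψ p.2).1, (ψ p.1).2)) :
          (Fin n1 → ℝ) × (Fin n1 → ℝ) × (Fin n2 → ℝ))) (X ×ˢ X) :=
      (continuous_fst.comp_continuousOn hψ1).prodMk
        ((continuous_fst.comp_continuousOn hψ2).prodMk (continuous_snd.comp_continuousOn hψ1))
    have hphic : ContinuousOn (fun p : ((Fin n1 → ℝ) × (Fin n2 → ℝ)) ×
        ((Fin n1 → ℝ) × (Fin n2 → ℝ)) =>
        phibar Ht G1 (ψ p.1).1 (ψ p.2).1 (ψ p.1).2) (X ×ˢ X) :=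
      hphibarC.comp hcmap fun p hp =>
        ⟨(hψmap hp.1).1, (hψmap hp.2).1, (hψmap hp.1).2⟩
    have hinvc : ContinuousOn (fun p : ((Fin n1 → ℝ) × (Fin n2 → ℝ)) ×
        ((Fin n1 → ℝ) × (Fin n2 → ℝ)) => ((E11t (ψ p.1))ᵀ)⁻¹) (X ×ˢ X) := by
      refine contOn_matrix_inv ?_ ?_
      · exact (Continuous.matrix_transpose continuous_id).comp_continuousOn
          (hE11tcont.comp hψ1 hmapψ1)
      · exact fun p hp => hE11detT _ (hψmap hp.1)
    have hvec1 : ContinuousOn (fun p : ((Fin n1 → ℝ) × (Fin n2 → ℝ)) ×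
        ((Fin n1 → ℝ) × (Fin n2 → ℝ)) =>
        ((E11t (ψ p.1))ᵀ)⁻¹ *ᵥ phibar Ht G1 (ψ p.1).1 (ψ p.2).1 (ψ p.1).2) (X ×ˢ X) :=
      contOn_mulVec hinvc hphic
    have hvec2 : ContinuousOn (fun p : ((Fin n1 → ℝ) × (Fin n2 → ℝ)) ×
        ((Fin n1 → ℝ) × (Fin n2 → ℝ)) =>
        (fun i => ztil (ψ p.1) (Sum.inr i))) (X ×ˢ X) :=
      continuousOn_pi.2 fun i =>
        (continuous_apply (Sum.inr i : Fin n1 ⊕ Fin n2)).comp_continuousOn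
          (hztilc.comp hψ1 hmapψ1)
    have helim : ContinuousOn (fun p : ((Fin n1 → ℝ) × (Fin n2 → ℝ)) ×
        ((Fin n1 → ℝ) × (Fin n2 → ℝ)) =>
        (Sum.elim (((E11t (ψ p.1))ᵀ)⁻¹ *ᵥ phibar Ht G1 (ψ p.1).1 (ψ p.2).1 (ψ p.1).2)
          (fun i => ztil (ψ p.1) (Sum.inr i)) : Fin n1 ⊕ Fin n2 → ℝ)) (X ×ˢ X) := by
      refine continuousOn_pi.2 fun i => ?_
      cases i with
      | inl i1 =>
        exact (continuous_apply i1).comp_continuousOn hvec1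
      | inr i2 =>
        exact (continuous_apply i2).comp_continuousOn hvec2
    exact contOn_mulVec (hUcont.comp hψ1 hmapψ1) helim
  · -- the discrete gradient identity
    intro x hx x' hx'
    beta_reduce
    have hy : ψ x ∈ Xt1 ×ˢ Xt2 := hψmap hx
    have hy' : ψ x' ∈ Xt1 ×ˢ Xt2 := hψmap hx'
    have hvec : (Sum.elim (x'.1 - x.1) (x'.2 - x.2) : Fin n1 ⊕ Fin n2 → ℝ) = flat (x' - x) :=
      funext fun i => by cases i <;> rfl
    rw [hvec]
    have h1 : (((U (ψ x))ᵀ)⁻¹ * Matrix.fromBlocks (E11t (ψ x)) 0 0 0 * psibar ψ x x').mulVec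
        (flat (x' - x))
        = ((U (ψ x))ᵀ)⁻¹ *ᵥ (Matrix.fromBlocks (E11t (ψ x)) 0 0 0 *ᵥ flat (ψ x' - ψ x)) := by
      rw [← Matrix.mulVec_mulVec, psibar_mulVec, ← Matrix.mulVec_mulVec]
    rw [h1, mulVec_inv_transpose_dot (U (ψ x)) (hUinv _ hy)]
    have h2 : flat (ψ x' - ψ x)
        = Sum.elim ((ψ x').1 - (ψ x).1) ((ψ x').2 - (ψ x).2) :=
      funext fun i => by cases i <;> rfl
    rw [h2, Matrix.fromBlocks_mulVec]
    simp only [Matrix.zero_mulVec, add_zero, zero_add, Sum.elim_comp_inl, Sum.elim_comp_inr]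
    rw [sumElim_dotProduct_sumElim, dotProduct_zero, add_zero]
    rw [inv_transpose_dot (E11t (ψ x)) (hE11tinv _ hy), phibar_dot]
    have e1 : Ht ((ψ x').1, (ψ x).2) = H x' := by
      calc Ht ((ψ x').1, (ψ x).2) = Ht ((ψ x').1, (ψ x').2) := hconst _ hy'.1 _ hy'.2 _ hy.2
        _ = H (φ (ψ x')) := rfl
        _ = H x' := by rw [hφψ x' hx']
    have e2 : Ht ((ψ x).1, (ψ x).2) = H x := by
      calc Ht ((ψ x).1, (ψ x).2) = H (φ (ψ x)) := rfl
        _ = H x := by rw [hφψ x hx]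
    rw [e1, e2]
  · -- Ebar diagonal
    intro x hx
    beta_reduce
    have hy : ψ x ∈ Xt1 ×ˢ Xt2 := hψmap hx
    rw [psibar_diag]
    have h1 : ((U (ψ x))ᵀ)⁻¹ * Matrix.fromBlocks (E11t (ψ x)) 0 0 0 = E x * jacP φ (ψ x) := by
      rw [← hEJ _ hy, hφψ x hx]
    rw [h1, Matrix.mul_assoc, hchain x hx, Matrix.mul_one]
  · -- zbar diagonal
    intro x hx
    beta_reduce
    have hy : ψ x ∈ Xt1 ×ˢ Xt2 := hψmap hx
    have hmk : ((ψ x).1, (ψ x).2) = ψ x := rfl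
    rw [phibar_diag, hmk]
    have h1 : ((E11t (ψ x))ᵀ)⁻¹ *ᵥ G1 (ψ x) = fun i => ztil (ψ x) (Sum.inl i) := by
      rw [hG1_def]
      rw [Matrix.mulVec_mulVec, Matrix.nonsing_inv_mul _ (hE11detT _ hy), Matrix.one_mulVec]
    rw [h1]
    have h2 : (Sum.elim (fun i => ztil (ψ x) (Sum.inl i)) (fun i => ztil (ψ x) (Sum.inr i)) :
        Fin n1 ⊕ Fin n2 → ℝ) = ztil (ψ x) := funext fun i => by cases i <;> rfl
    rw [h2, hztil_def]
    rw [Matrix.mulVec_mulVec, Matrix.mul_nonsing_inv _ (hUinv _ hy), Matrix.one_mulVec, hφψ x hx]
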